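/- Let (Q0, Q1, Q2, Q3, A1, A2) be a solution of system (S) on [0, T) with initial data satisfying Q_i(0) ≥ 0 for i = 0,1,2,3, A1(0) ∈ [-τ_{A1}, τ_{A1}] and A2(0) ∈ [0, τ_{A2}]. Then for all t ∈ [0, T) and all i = 0,1,2,3 one has Q_i(t) ≥ 0. -/

import Mathlib

open MeasureTheory

/-- Auxiliary: a scalar linear ODE `u' = a u + h` with nonnegative forcing `h`
preserves nonnegativity of `u` on `[0, T)`, provided `a` is continuous on `(-∞, T)`. -/
lemma aux_nonneg (T : ℝ) (a h u : ℝ → ℝ)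
    (ha : ∀ t < T, ContinuousAt a t)
    (hu : ∀ t ∈ Set.Ico (0:ℝ) T, HasDerivAt u (a t * u t + h t) t)
    (hh : ∀ t ∈ Set.Ico (0:ℝ) T, 0 ≤ h t)
    (h0 : 0 ≤ u 0) :
    ∀ t ∈ Set.Ico (0:ℝ) T, 0 ≤ u t := by
  intro t₁ ht₁
  obtain ⟨ht₁0, ht₁T⟩ := ht₁
  set B : ℝ → ℝ := fun s => ∫ x in (0:ℝ)..s, a x with hBdef
  have haC : ContinuousOn a (Set.Iio T) := fun x hx => (ha x hx).continuousWithinAt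
  have hBderiv : ∀ s ∈ Set.Icc (0:ℝ) t₁, HasDerivAt B (a s) s := by
    intro s hs
    have hsT : s < T := lt_of_le_of_lt hs.2 ht₁T
    have hint : IntervalIntegrable a volume 0 s := by
      apply ContinuousOn.intervalIntegrable
      intro x hx
      have hxT : x < T := by
        rcases Set.mem_uIcc.mp hx with h' | h'
        · exact lt_of_le_of_lt h'.2 hsT
        · exact lt_of_le_of_lt h'.2 (lt_of_le_of_lt hs.1 hsT)
      exact (ha x hxT).continuousWithinAt
    exact intervalIntegral.integral_hasDerivAt_right hint
      (haC.stronglyMeasurableAtFilter isOpen_Iio s hsT) (ha s hsT)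
  set g : ℝ → ℝ := fun s => u s * Real.exp (-B s) with hgdef
  have hgderiv : ∀ s ∈ Set.Icc (0:ℝ) t₁, HasDerivAt g (h s * Real.exp (-B s)) s := by
    intro s hs
    have hsI : s ∈ Set.Ico (0:ℝ) T := ⟨hs.1, lt_of_le_of_lt hs.2 ht₁T⟩
    have h1 := (hu s hsI).fun_mul ((hBderiv s hs).neg.exp)
    refine h1.congr_deriv ?_
    simp only [Pi.neg_apply]
    ring
  have hmono : MonotoneOn g (Set.Icc 0 t₁) := by
    apply monotoneOn_of_deriv_nonneg (convex_Icc 0 t₁)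
    · intro s hs; exact (hgderiv s hs).continuousAt.continuousWithinAt
    · intro s hs
      exact (hgderiv s (interior_subset hs)).differentiableAt.differentiableWithinAt
    · intro s hs
      have hs' : s ∈ Set.Icc (0:ℝ) t₁ := interior_subset hs
      rw [(hgderiv s hs').deriv]
      exact mul_nonneg (hh s ⟨hs'.1, lt_of_le_of_lt hs'.2 ht₁T⟩) (Real.exp_pos _).le
  have h01 : g 0 ≤ g t₁ :=
    hmono (Set.left_mem_Icc.mpr ht₁0) (Set.right_mem_Icc.mpr ht₁0) ht₁0
  have hg0 : g 0 = u 0 := by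
    simp [hgdef, hBdef, intervalIntegral.integral_same]
  have hgt : 0 ≤ u t₁ * Real.exp (-B t₁) := le_trans (hg0 ▸ h0) h01
  have h2 := mul_nonneg hgt (Real.exp_pos (B t₁)).le
  rwa [mul_assoc, ← Real.exp_add, neg_add_cancel, Real.exp_zero, mul_one] at h2

theorem stmt0
    (T : ℝ) (hT : 0 < T)
    (γ2 γ3 τC τA1 τA1C τA2 τA2C α1 α2 α3 αb2 αb3 : ℝ)
    (hγ2 : 0 < γ2) (hγ3 : 0 < γ3) (hτC : 0 < τC) (hτA1 : 0 < τA1)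
    (hτA1C : 0 < τA1C) (hτA2 : 0 < τA2) (hτA2C : 0 < τA2C)
    (hα1 : 0 < α1) (hα2 : 0 < α2) (hα3 : 0 < α3) (hαb2 : 0 < αb2) (hαb3 : 0 < αb3)
    (f0 : ℝ → ℝ → ℝ) (f1 : ℝ → ℝ) (f2 : ℝ → ℝ → ℝ)
    (K0 K1 K2 : NNReal)
    (hf0lip : LipschitzWith K0 (fun p : ℝ × ℝ => f0 p.1 p.2))
    (hf1lip : LipschitzWith K1 f1)
    (hf2lip : LipschitzWith K2 (fun p : ℝ × ℝ => f2 p.1 p.2))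
    (m0 M0 m1 M1 m2 M2 : ℝ) (hm0 : 0 < m0) (hm1 : 0 < m1) (hm2 : 0 < m2)
    (hf0bd : ∀ x y, m0 ≤ f0 x y ∧ f0 x y ≤ M0)
    (hf1bd : ∀ x, m1 ≤ f1 x ∧ f1 x ≤ M1)
    (hf2bd : ∀ x y, m2 ≤ f2 x y ∧ f2 x y ≤ M2)
    (Q0 Q1 Q2 Q3 A1 A2 : ℝ → ℝ)
    (hQ0' : ∀ t ∈ Set.Ico 0 T, HasDerivAt Q0 (-(f0 (Q2 t) (Q3 t)) * Q0 t) t)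
    (hQ1' : ∀ t ∈ Set.Ico 0 T, HasDerivAt Q1 (f0 (Q2 t) (Q3 t) * Q0 t - f1 (A1 t) * Q1 t) t)
    (hQ2' : ∀ t ∈ Set.Ico 0 T, HasDerivAt Q2
      (γ2 * Q2 t * (1 - (Q2 t + Q3 t) / τC + A1 t / τA1C + A2 t / τA2C)
        + f1 (A1 t) * Q1 t - f2 (A1 t) (A2 t) * Q2 t) t)
    (hQ3' : ∀ t ∈ Set.Ico 0 T, HasDerivAt Q3
      (γ3 * Q3 t * (1 - (Q2 t + Q3 t) / τC + A1 t / τA1C + A2 t / τA2C)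
        + f2 (A1 t) (A2 t) * Q2 t) t)
    (hA1' : ∀ t ∈ Set.Ico 0 T, HasDerivAt A1
      ((α1 * Q1 t + α2 * Q2 t - α3 * Q3 t) * (1 + A1 t / τA1) * (1 - A1 t / τA1)) t)
    (hA2' : ∀ t ∈ Set.Ico 0 T, HasDerivAt A2
      ((αb2 * Q2 t + αb3 * Q3 t) * A2 t * (1 - A2 t / τA2)) t)
    (hQ0i : 0 ≤ Q0 0) (hQ1i : 0 ≤ Q1 0) (hQ2i : 0 ≤ Q2 0) (hQ3i : 0 ≤ Q3 0)
    (hA1i : A1 0 ∈ Set.Icc (-τA1) τA1) (hA2i : A2 0 ∈ Set.Icc 0 τA2) :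
    ∀ t ∈ Set.Ico 0 T, 0 ≤ Q0 t ∧ 0 ≤ Q1 t ∧ 0 ≤ Q2 t ∧ 0 ≤ Q3 t := by
  -- continuity of the solution components at points of [0, T)
  have hcQ2 : ∀ t ∈ Set.Ico (0:ℝ) T, ContinuousAt Q2 t := fun t ht => (hQ2' t ht).continuousAt
  have hcQ3 : ∀ t ∈ Set.Ico (0:ℝ) T, ContinuousAt Q3 t := fun t ht => (hQ3' t ht).continuousAt
  have hcA1 : ∀ t ∈ Set.Ico (0:ℝ) T, ContinuousAt A1 t := fun t ht => (hA1' t ht).continuousAt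
  have hcA2 : ∀ t ∈ Set.Ico (0:ℝ) T, ContinuousAt A2 t := fun t ht => (hA2' t ht).continuousAt
  have hm : ∀ t : ℝ, ContinuousAt (fun s : ℝ => max s 0) t :=
    fun t => (continuous_id.max continuous_const).continuousAt
  have hmem : ∀ t < T, max t 0 ∈ Set.Ico (0:ℝ) T :=
    fun t ht => ⟨le_max_right t 0, max_lt ht hT⟩
  have hmeq : ∀ t ∈ Set.Ico (0:ℝ) T, max t 0 = t := fun t ht => max_eq_left ht.1
  -- continuity of (truncated) composed coefficients
  have hc2 : ∀ t < T, ContinuousAt (fun s => Q2 (max s 0)) t :=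
    fun t ht => ContinuousAt.comp (g := Q2) (hcQ2 _ (hmem t ht)) (hm t)
  have hc3 : ∀ t < T, ContinuousAt (fun s => Q3 (max s 0)) t :=
    fun t ht => ContinuousAt.comp (g := Q3) (hcQ3 _ (hmem t ht)) (hm t)
  have hcA1' : ∀ t < T, ContinuousAt (fun s => A1 (max s 0)) t :=
    fun t ht => ContinuousAt.comp (g := A1) (hcA1 _ (hmem t ht)) (hm t)
  have hcA2' : ∀ t < T, ContinuousAt (fun s => A2 (max s 0)) t :=
    fun t ht => ContinuousAt.comp (g := A2) (hcA2 _ (hmem t ht)) (hm t)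
  have hcf0 : ∀ t < T, ContinuousAt (fun s => f0 (Q2 (max s 0)) (Q3 (max s 0))) t :=
    fun t ht => hf0lip.continuous.continuousAt.comp ((hc2 t ht).prodMk (hc3 t ht))
  have hcf2 : ∀ t < T, ContinuousAt (fun s => f2 (A1 (max s 0)) (A2 (max s 0))) t :=
    fun t ht => hf2lip.continuous.continuousAt.comp ((hcA1' t ht).prodMk (hcA2' t ht))
  have hcf1 : ∀ t < T, ContinuousAt (fun s => f1 (A1 (max s 0))) t :=
    fun t ht => hf1lip.continuous.continuousAt.comp (hcA1' t ht)
  -- the logistic-type coefficient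
  have hcL : ∀ t < T, ContinuousAt (fun s =>
      1 - (Q2 (max s 0) + Q3 (max s 0)) / τC + A1 (max s 0) / τA1C + A2 (max s 0) / τA2C) t := by
    intro t ht
    exact ((continuousAt_const.sub (((hc2 t ht).add (hc3 t ht)).div_const τC)).add
      ((hcA1' t ht).div_const τA1C)).add ((hcA2' t ht).div_const τA2C)
  -- Step 1 : Q0 ≥ 0
  have hQ0nn : ∀ t ∈ Set.Ico (0:ℝ) T, 0 ≤ Q0 t := by
    apply aux_nonneg T (fun s => -(f0 (Q2 (max s 0)) (Q3 (max s 0)))) (fun _ => 0) Q0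
    · intro t ht; exact (hcf0 t ht).neg
    · intro t ht
      have h := hQ0' t ht
      rw [show (-(f0 (Q2 (max t 0)) (Q3 (max t 0))) * Q0 t + 0)
          = -(f0 (Q2 t) (Q3 t)) * Q0 t by rw [hmeq t ht]; ring]
      exact h
    · intro t ht; exact le_refl 0
    · exact hQ0i
  -- Step 2 : Q1 ≥ 0
  have hQ1nn : ∀ t ∈ Set.Ico (0:ℝ) T, 0 ≤ Q1 t := by
    apply aux_nonneg T (fun s => -(f1 (A1 (max s 0))))
      (fun s => f0 (Q2 s) (Q3 s) * Q0 s) Q1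
    · intro t ht; exact (hcf1 t ht).neg
    · intro t ht
      have h := hQ1' t ht
      rw [show (-(f1 (A1 (max t 0))) * Q1 t + f0 (Q2 t) (Q3 t) * Q0 t)
          = f0 (Q2 t) (Q3 t) * Q0 t - f1 (A1 t) * Q1 t by rw [hmeq t ht]; ring]
      exact h
    · intro t ht
      exact mul_nonneg (le_trans hm0.le (hf0bd (Q2 t) (Q3 t)).1) (hQ0nn t ht)
    · exact hQ1i
  -- Step 3 : Q2 ≥ 0
  have hQ2nn : ∀ t ∈ Set.Ico (0:ℝ) T, 0 ≤ Q2 t := by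
    apply aux_nonneg T (fun s =>
        γ2 * (1 - (Q2 (max s 0) + Q3 (max s 0)) / τC + A1 (max s 0) / τA1C + A2 (max s 0) / τA2C)
          - f2 (A1 (max s 0)) (A2 (max s 0)))
      (fun s => f1 (A1 s) * Q1 s) Q2
    · intro t ht
      exact (continuousAt_const.mul (hcL t ht)).sub (hcf2 t ht)
    · intro t ht
      have h := hQ2' t ht
      rw [show ((γ2 * (1 - (Q2 (max t 0) + Q3 (max t 0)) / τC + A1 (max t 0) / τA1C
            + A2 (max t 0) / τA2C) - f2 (A1 (max t 0)) (A2 (max t 0))) * Q2 t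
            + f1 (A1 t) * Q1 t)
          = γ2 * Q2 t * (1 - (Q2 t + Q3 t) / τC + A1 t / τA1C + A2 t / τA2C)
            + f1 (A1 t) * Q1 t - f2 (A1 t) (A2 t) * Q2 t by rw [hmeq t ht]; ring]
      exact h
    · intro t ht
      exact mul_nonneg (le_trans hm1.le (hf1bd (A1 t)).1) (hQ1nn t ht)
    · exact hQ2i
  -- Step 4 : Q3 ≥ 0
  have hQ3nn : ∀ t ∈ Set.Ico (0:ℝ) T, 0 ≤ Q3 t := by
    apply aux_nonneg T (fun s =>
        γ3 * (1 - (Q2 (max s 0) + Q3 (max s 0)) / τC + A1 (max s 0) / τA1C + A2 (max s 0) / τA2C))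
      (fun s => f2 (A1 s) (A2 s) * Q2 s) Q3
    · intro t ht
      exact continuousAt_const.mul (hcL t ht)
    · intro t ht
      have h := hQ3' t ht
      rw [show (γ3 * (1 - (Q2 (max t 0) + Q3 (max t 0)) / τC + A1 (max t 0) / τA1C
            + A2 (max t 0) / τA2C) * Q3 t + f2 (A1 t) (A2 t) * Q2 t)
          = γ3 * Q3 t * (1 - (Q2 t + Q3 t) / τC + A1 t / τA1C + A2 t / τA2C)
            + f2 (A1 t) (A2 t) * Q2 t by rw [hmeq t ht]; ring]
      exact h
    · intro t ht
      exact mul_nonneg (le_trans hm2.le (hf2bd (A1 t) (A2 t)).1) (hQ2nn t ht)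
    · exact hQ3i
  exact fun t ht => ⟨hQ0nn t ht, hQ1nn t ht, hQ2nn t ht, hQ3nn t ht⟩
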